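/- Let a, b > 0, ν ∈ (0,1), n ≥ 1, h = b/a, K(t) = (1+t)²/(4t), m_k = ⌊2^k ν⌋, r₀ = min{ν,1-ν}, r_k = min{2r_{k-1}, 1−2r_{k-1}}, R_n = 1 − r_n. Then K(h^{1/2^{n-1}})^{r_n} · a^{2(1-ν)} b^{2ν} ≤ (1-ν)a² + νb² − Σ_{k=0}^{n-1} r_k [ a^{1 − m_k/2^k} b^{m_k/2^k} − a^{1 − (m_k+1)/2^k} b^{(m_k+1)/2^k} ]² ≤ K(h^{1/2^{n-1}})^{R_n} · a^{2(1-ν)} b^{2ν}. -/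

import Mathlib

open Real Finset

noncomputable def Kc (t : ℝ) : ℝ := (1 + t)^2 / (4 * t)

noncomputable def rseq (ν : ℝ) : ℕ → ℝ
  | 0 => min ν (1 - ν)
  | k + 1 => min (2 * rseq ν k) (1 - 2 * rseq ν k)

noncomputable def mfl (ν : ℝ) (k : ℕ) : ℝ := ⌊(2:ℝ)^k * ν⌋

/-! ### Auxiliary scalar lemmas -/

lemma Kc_pos {t : ℝ} (ht : 0 < t) : 0 < Kc t := by
  unfold Kc
  have : 0 < 1 + t := by linarith
  positivity

lemma one_le_Kc {t : ℝ} (ht : 0 < t) : 1 ≤ Kc t := by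
  rw [Kc, le_div_iff₀ (by linarith)]
  nlinarith [sq_nonneg (1 - t)]

lemma Kc_inv {t : ℝ} (ht : 0 < t) : Kc t⁻¹ = Kc t := by
  unfold Kc
  have ht' : t ≠ 0 := ne_of_gt ht
  field_simp
  ring

lemma bern {s p : ℝ} (hs : 0 ≤ s) (h0 : 0 ≤ p) (h1 : p ≤ 1) :
    s ^ p ≤ 1 - p + p * s := by
  have := Real.geom_mean_le_arith_mean2_weighted (sub_nonneg.2 h1) h0 zero_le_one hs
    (by ring)
  simpa [Real.one_rpow] using this

lemma Kc_mul_self {t : ℝ} (ht : 0 < t) : Kc t * t = ((1 + t)/2)^2 := by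
  unfold Kc; field_simp; ring

lemma young_lower_half {t μ : ℝ} (ht : 0 < t) (h0 : 0 ≤ μ) (h1 : μ ≤ 1/2) :
    Kc t ^ μ * t ^ μ ≤ 1 - μ + μ * t := by
  have hK := Kc_pos ht
  have e1 : Kc t ^ μ * t ^ μ = ((1 + t)/2) ^ (2 * μ) := by
    rw [← Real.mul_rpow hK.le ht.le, Kc_mul_self ht, ← Real.rpow_natCast ((1+t)/2) 2,
      ← Real.rpow_mul (by linarith)]
    norm_num
  rw [e1]
  have hb := bern (s := (1+t)/2) (p := 2*μ) (by linarith) (by linarith) (by linarith)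
  calc ((1 + t)/2) ^ (2*μ) ≤ 1 - 2*μ + 2*μ * ((1+t)/2) := hb
    _ = 1 - μ + μ * t := by ring

lemma young_lower {t μ : ℝ} (ht : 0 < t) (h0 : 0 ≤ μ) (h1 : μ ≤ 1) :
    Kc t ^ min μ (1 - μ) * t ^ μ ≤ 1 - μ + μ * t := by
  rcases le_or_gt μ (1/2) with hc | hc
  · rw [min_eq_left (by linarith)]
    exact young_lower_half ht h0 hc
  · rw [min_eq_right (by linarith)]
    have h2 := young_lower_half (t := t⁻¹) (μ := 1 - μ) (by positivity) (by linarith) (by linarith)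
    rw [Kc_inv ht] at h2
    have ht' : t ≠ 0 := ne_of_gt ht
    have h3 := mul_le_mul_of_nonneg_right h2 ht.le
    calc Kc t ^ (1 - μ) * t ^ μ
        = Kc t ^ (1-μ) * t⁻¹ ^ (1-μ) * t := by
          rw [Real.inv_rpow ht.le, ← Real.rpow_neg ht.le, mul_assoc,
            ← Real.rpow_add_one ht']
          ring_nf
      _ ≤ (1 - (1-μ) + (1-μ) * t⁻¹) * t := h3
      _ = 1 - μ + μ * t := by field_simp; ring

lemma young_upper {t μ : ℝ} (ht : 0 < t) (h0 : 0 ≤ μ) (h1 : μ ≤ 1) :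
    1 - μ + μ * t ≤ Kc t ^ (1 - min μ (1 - μ)) * t ^ μ := by
  set r := min μ (1 - μ) with hr
  have ht' : t ≠ 0 := ne_of_gt ht
  have hK := Kc_pos ht
  have hA : 0 < 1 - μ + μ * t := by
    rcases eq_or_lt_of_le h1 with rfl | hlt
    · nlinarith
    · nlinarith [mul_nonneg h0 ht.le]
  have h2 : Kc t ^ r * t ^ (-μ) ≤ 1 - μ + μ * t⁻¹ := by
    have := young_lower (t := t⁻¹) (μ := μ) (by positivity) h0 h1
    rw [Kc_inv ht, Real.inv_rpow ht.le, ← Real.rpow_neg ht.le] at this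
    simpa using this
  have hid : (1 - μ + μ * t) * (1 - μ + μ * t⁻¹) = 1 + 4 * μ * (1 - μ) * (Kc t - 1) := by
    unfold Kc; field_simp; ring
  have h4 : (1 - μ + μ * t) * (Kc t ^ r * t ^ (-μ)) ≤ Kc t := by
    calc (1 - μ + μ * t) * (Kc t ^ r * t ^ (-μ))
        ≤ (1 - μ + μ * t) * (1 - μ + μ * t⁻¹) := mul_le_mul_of_nonneg_left h2 hA.le
      _ = 1 + 4 * μ * (1 - μ) * (Kc t - 1) := hid
      _ ≤ Kc t := by nlinarith [one_le_Kc ht, sq_nonneg (1 - 2*μ)]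
  have hKr : (0:ℝ) < Kc t ^ r := Real.rpow_pos_of_pos hK r
  have htm : (0:ℝ) < t ^ (-μ) := Real.rpow_pos_of_pos ht _
  have h5 : 1 - μ + μ * t ≤ Kc t / (Kc t ^ r * t ^ (-μ)) := by
    rw [le_div_iff₀ (by positivity)]
    linarith [h4]
  calc 1 - μ + μ * t ≤ Kc t / (Kc t ^ r * t ^ (-μ)) := h5
    _ = Kc t ^ (1 - r) * t ^ μ := by
        rw [Real.rpow_sub hK, Real.rpow_one, Real.rpow_neg ht.le]
        field_simp

/-! ### Floor/fractional-part recursions -/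

noncomputable def fra (ν : ℝ) (k : ℕ) : ℝ := Int.fract ((2:ℝ)^k * ν)

lemma fra_nonneg (ν : ℝ) (k : ℕ) : 0 ≤ fra ν k := Int.fract_nonneg _
lemma fra_lt_one (ν : ℝ) (k : ℕ) : fra ν k < 1 := Int.fract_lt_one _

lemma mfl_add_fra (ν : ℝ) (k : ℕ) : mfl ν k + fra ν k = (2:ℝ)^k * ν := by
  simpa [mfl, fra] using Int.floor_add_fract ((2:ℝ)^k * ν)

lemma two_mul_split (ν : ℝ) (k : ℕ) :
    (2:ℝ)^(k+1) * ν = ((2 * ⌊(2:ℝ)^k * ν⌋ : ℤ) : ℝ) + 2 * fra ν k := by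
  have := mfl_add_fra ν k
  push_cast
  rw [pow_succ]
  simp only [mfl] at this
  nlinarith [this]

lemma fra_succ (ν : ℝ) (k : ℕ) :
    fra ν (k+1) = if fra ν k < 1/2 then 2 * fra ν k else 2 * fra ν k - 1 := by
  have h0 := fra_nonneg ν k
  have h1 := fra_lt_one ν k
  rw [fra, two_mul_split, Int.fract_intCast_add]
  split_ifs with hc
  · exact Int.fract_eq_self.2 ⟨by linarith, by linarith⟩
  · have : Int.fract (2 * fra ν k) = Int.fract ((2 * fra ν k - 1) + (1:ℤ)) := by norm_num
    rw [this, Int.fract_add_intCast]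
    exact Int.fract_eq_self.2 ⟨by linarith [not_lt.1 hc], by linarith⟩

lemma mfl_succ (ν : ℝ) (k : ℕ) :
    mfl ν (k+1) = if fra ν k < 1/2 then 2 * mfl ν k else 2 * mfl ν k + 1 := by
  have h0 := fra_nonneg ν k
  have h1 := fra_lt_one ν k
  rw [mfl, two_mul_split, Int.floor_intCast_add]
  split_ifs with hc
  · have : ⌊2 * fra ν k⌋ = 0 := Int.floor_eq_zero_iff.2 ⟨by linarith, by linarith⟩
    rw [this]; push_cast [mfl]; ring
  · have : ⌊2 * fra ν k⌋ = 1 := by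
      rw [Int.floor_eq_iff]
      constructor <;> push_cast <;> [linarith [not_lt.1 hc]; linarith]
    rw [this]; push_cast [mfl]; ring

lemma rseq_eq (ν : ℝ) (hν : ν ∈ Set.Ioo (0:ℝ) 1) (k : ℕ) :
    rseq ν k = min (fra ν k) (1 - fra ν k) := by
  induction k with
  | zero =>
    have : fra ν 0 = ν := by
      rw [fra, pow_zero, one_mul]
      exact Int.fract_eq_self.2 ⟨hν.1.le, hν.2⟩
    rw [this]; rfl
  | succ k ih =>
    have h0 := fra_nonneg ν k
    have h1 := fra_lt_one ν k
    rw [show rseq ν (k+1) = min (2 * rseq ν k) (1 - 2 * rseq ν k) from rfl, ih, fra_succ]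
    split_ifs with hc
    · rw [min_eq_left (show fra ν k ≤ 1 - fra ν k by linarith)]
    · rw [min_eq_right (show 1 - fra ν k ≤ fra ν k by linarith [not_lt.1 hc]), min_comm]
      congr 1 <;> ring

/-! ### rpow manipulation helpers -/

lemma UV_sq (a b : ℝ) (ha : 0 < a) (hb : 0 < b) (p q : ℝ) :
    (a ^ p * b ^ q)^2 = a ^ (2*p) * b ^ (2*q) := by
  have key : ∀ c : ℝ, 0 < c → ∀ s : ℝ, (c ^ s)^2 = c ^ (2*s) := by
    intro c hc s
    rw [← Real.rpow_natCast (c ^ s) 2, ← Real.rpow_mul hc.le]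
    norm_num [mul_comm]
  rw [mul_pow, key a ha, key b hb]

lemma UV_mul (a b : ℝ) (ha : 0 < a) (hb : 0 < b) (p q p' q' : ℝ) :
    (a ^ p * b ^ q) * (a ^ p' * b ^ q') = a ^ (p + p') * b ^ (q + q') := by
  rw [mul_mul_mul_comm, ← Real.rpow_add ha, ← Real.rpow_add hb]

/-! ### The key telescoping identity -/

lemma key_id (a b ν : ℝ) (ha : 0 < a) (hb : 0 < b) (hν : ν ∈ Set.Ioo (0:ℝ) 1) (n : ℕ) :
    (1 - ν) * a^2 + ν * b^2 - (∑ k ∈ Finset.range n, rseq ν k * (a ^ (1 - mfl ν k / 2^k) * b ^ (mfl ν k / 2^k) - a ^ (1 - (mfl ν k + 1) / 2^k) * b ^ ((mfl ν k + 1) / 2^k))^2)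
    = (1 - fra ν n) * (a ^ (1 - mfl ν n / 2^n) * b ^ (mfl ν n / 2^n))^2
      + fra ν n * (a ^ (1 - (mfl ν n + 1) / 2^n) * b ^ ((mfl ν n + 1) / 2^n))^2 := by
  induction n with
  | zero =>
    have hm0 : mfl ν 0 = 0 := by
      rw [mfl, pow_zero, one_mul]
      norm_cast
      exact Int.floor_eq_zero_iff.2 ⟨hν.1.le, hν.2⟩
    have hf0 : fra ν 0 = ν := by
      rw [fra, pow_zero, one_mul]
      exact Int.fract_eq_self.2 ⟨hν.1.le, hν.2⟩
    rw [hm0, hf0]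
    norm_num [Real.rpow_one]
  | succ n ih =>
    have h2n : ((2:ℝ)^n) ≠ 0 := by positivity
    have h2n1 : ((2:ℝ)^(n+1)) ≠ 0 := by positivity
    have h0 := fra_nonneg ν n
    have h1 := fra_lt_one ν n
    rw [Finset.sum_range_succ, ← sub_sub, ih]
    rcases lt_or_ge (fra ν n) (1/2) with hc | hc
    · have hrn : rseq ν n = fra ν n := by
        rw [rseq_eq ν hν n]; exact min_eq_left (by linarith)
      have hf' : fra ν (n+1) = 2 * fra ν n := by rw [fra_succ, if_pos hc]
      have hm' : mfl ν (n+1) = 2 * mfl ν n := by rw [mfl_succ, if_pos hc]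
      have hU' : (a ^ (1 - mfl ν (n+1) / 2^(n+1)) * b ^ (mfl ν (n+1) / 2^(n+1)))
          = a ^ (1 - mfl ν n / 2^n) * b ^ (mfl ν n / 2^n) := by
        rw [hm', show (2 * mfl ν n) / (2:ℝ)^(n+1) = mfl ν n / 2^n by field_simp; ring]
      have hV' : (a ^ (1 - (mfl ν (n+1) + 1) / 2^(n+1)) * b ^ ((mfl ν (n+1) + 1) / 2^(n+1)))^2
          = (a ^ (1 - mfl ν n / 2^n) * b ^ (mfl ν n / 2^n))
            * (a ^ (1 - (mfl ν n + 1) / 2^n) * b ^ ((mfl ν n + 1) / 2^n)) := by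
        rw [hm', UV_sq a b ha hb, UV_mul a b ha hb]
        congr 1 <;> congr 1 <;> (field_simp; ring)
      rw [hf', hm'] at *
      rw [hU', hV', hrn]
      ring
    · have hrn : rseq ν n = 1 - fra ν n := by
        rw [rseq_eq ν hν n]; exact min_eq_right (by linarith)
      have hf' : fra ν (n+1) = 2 * fra ν n - 1 := by
        rw [fra_succ, if_neg (not_lt.2 hc)]
      have hm' : mfl ν (n+1) = 2 * mfl ν n + 1 := by
        rw [mfl_succ, if_neg (not_lt.2 hc)]
      have hV' : (a ^ (1 - (mfl ν (n+1) + 1) / 2^(n+1)) * b ^ ((mfl ν (n+1) + 1) / 2^(n+1)))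
          = a ^ (1 - (mfl ν n + 1) / 2^n) * b ^ ((mfl ν n + 1) / 2^n) := by
        rw [hm', show (2 * mfl ν n + 1 + 1) / (2:ℝ)^(n+1) = (mfl ν n + 1) / 2^n by
          field_simp; ring]
      have hU' : (a ^ (1 - mfl ν (n+1) / 2^(n+1)) * b ^ (mfl ν (n+1) / 2^(n+1)))^2
          = (a ^ (1 - mfl ν n / 2^n) * b ^ (mfl ν n / 2^n))
            * (a ^ (1 - (mfl ν n + 1) / 2^n) * b ^ ((mfl ν n + 1) / 2^n)) := by
        rw [hm', UV_sq a b ha hb, UV_mul a b ha hb]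
        congr 1 <;> congr 1 <;> (field_simp; ring)
      rw [hf', hm'] at *
      rw [hU', hV', hrn]
      ring

theorem stmt19 (a b ν : ℝ) (ha : 0 < a) (hb : 0 < b) (hν : ν ∈ Set.Ioo (0:ℝ) 1)
    (n : ℕ) (hn : 1 ≤ n) (h : ℝ) (hh : h = b / a) :
    Kc (h ^ ((1:ℝ)/2^(n-1))) ^ rseq ν n * (a ^ (2*(1 - ν)) * b ^ (2*ν)) ≤
      (1 - ν) * a^2 + ν * b^2 - (∑ k ∈ Finset.range n, rseq ν k * (a ^ (1 - mfl ν k / 2^k) * b ^ (mfl ν k / 2^k) - a ^ (1 - (mfl ν k + 1) / 2^k) * b ^ ((mfl ν k + 1) / 2^k))^2) ∧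
    (1 - ν) * a^2 + ν * b^2 - (∑ k ∈ Finset.range n, rseq ν k * (a ^ (1 - mfl ν k / 2^k) * b ^ (mfl ν k / 2^k) - a ^ (1 - (mfl ν k + 1) / 2^k) * b ^ ((mfl ν k + 1) / 2^k))^2) ≤
      Kc (h ^ ((1:ℝ)/2^(n-1))) ^ (1 - rseq ν n) * (a ^ (2*(1 - ν)) * b ^ (2*ν)) := by
  obtain ⟨hν0, hν1⟩ := hν
  have hνIoo : ν ∈ Set.Ioo (0:ℝ) 1 := ⟨hν0, hν1⟩
  have h2n : ((2:ℝ)^n) ≠ 0 := by positivity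
  rw [key_id a b ν ha hb hνIoo n]
  set m := mfl ν n with hm
  set μ := fra ν n with hμ
  have hμ0 : 0 ≤ μ := fra_nonneg ν n
  have hμ1 : μ ≤ 1 := (fra_lt_one ν n).le
  have hmf : m + μ = (2:ℝ)^n * ν := mfl_add_fra ν n
  have hνeq : ν = (m + μ)/(2:ℝ)^n := by rw [eq_div_iff h2n]; linarith [hmf]
  set U := a ^ (1 - m / 2^n) * b ^ (m/2^n) with hUdef
  set V := a ^ (1 - (m+1) / 2^n) * b ^ ((m+1)/2^n) with hVdef
  have hU0 : 0 < U := by rw [hUdef]; positivity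
  have hV0 : 0 < V := by rw [hVdef]; positivity
  have hX : 0 < U^2 := pow_pos hU0 2
  have hY : 0 < V^2 := pow_pos hV0 2
  have ht : 0 < V^2/U^2 := by positivity
  have hXe : U^2 = a ^ (2*(1 - m/2^n)) * b ^ (2*(m/2^n)) := by
    rw [hUdef, UV_sq a b ha hb]
  have hYe : V^2 = a ^ (2*(1 - (m+1)/2^n)) * b ^ (2*((m+1)/2^n)) := by
    rw [hVdef, UV_sq a b ha hb]
  have hne : n - 1 + 1 = n := Nat.succ_pred_eq_of_pos hn
  have h2pow : (2:ℝ)^n = (2:ℝ)^(n-1) * 2 := by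
    have := pow_succ (2:ℝ) (n-1)
    rw [hne] at this
    exact this
  have h2n1 : ((2:ℝ)^(n-1)) ≠ 0 := by positivity
  have hexp : (1:ℝ)/2^(n-1) = 2/2^n := by
    rw [h2pow]; field_simp
  have ht0 : h ^ ((1:ℝ)/2^(n-1)) = V^2/U^2 := by
    rw [hexp, hh, hXe, hYe, mul_div_mul_comm, ← Real.rpow_sub ha, ← Real.rpow_sub hb,
      Real.div_rpow hb.le ha.le,
      show 2*(1 - (m+1)/2^n) - 2*(1 - m/2^n) = -(2/2^n) by field_simp; ring,
      show 2*((m+1)/2^n) - 2*(m/2^n) = 2/2^n by field_simp; ring,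
      Real.rpow_neg ha.le, div_eq_mul_inv]
    ring
  have hG : (U^2) ^ (1-μ) * (V^2) ^ μ = a^(2*(1-ν)) * b^(2*ν) := by
    rw [hXe, hYe, Real.mul_rpow (by positivity) (by positivity),
      Real.mul_rpow (by positivity) (by positivity),
      ← Real.rpow_mul ha.le, ← Real.rpow_mul hb.le, ← Real.rpow_mul ha.le,
      ← Real.rpow_mul hb.le, mul_mul_mul_comm, ← Real.rpow_add ha, ← Real.rpow_add hb, hνeq]
    congr 1 <;> congr 1 <;> (field_simp; ring)
  have hXμ : ((U^2):ℝ) ^ μ ≠ 0 := by positivity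
  have hmix : (V^2/U^2) ^ μ * U^2 = (U^2)^(1-μ) * (V^2)^μ := by
    rw [Real.div_rpow hY.le hX.le, Real.rpow_sub hX, Real.rpow_one]
    field_simp
  have hcan : (V^2/U^2) * U^2 = V^2 := div_mul_cancel₀ _ (ne_of_gt hX)
  constructor
  · have hlow := young_lower ht hμ0 hμ1
    rw [rseq_eq ν hνIoo n, ← hμ, ht0, ← hG, ← hmix]
    calc Kc (V^2/U^2) ^ min μ (1-μ) * ((V^2/U^2)^μ * U^2)
        = (Kc (V^2/U^2) ^ min μ (1-μ) * (V^2/U^2)^μ) * U^2 := by ring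
      _ ≤ (1 - μ + μ * (V^2/U^2)) * U^2 := mul_le_mul_of_nonneg_right hlow hX.le
      _ = (1-μ)*U^2 + μ*((V^2/U^2)*U^2) := by ring
      _ = (1-μ)*U^2 + μ*V^2 := by rw [hcan]
  · have hup := young_upper ht hμ0 hμ1
    rw [rseq_eq ν hνIoo n, ← hμ, ht0, ← hG, ← hmix]
    calc (1-μ)*U^2 + μ*V^2
        = (1-μ)*U^2 + μ*((V^2/U^2)*U^2) := by rw [hcan]
      _ = (1 - μ + μ * (V^2/U^2)) * U^2 := by ring
      _ ≤ (Kc (V^2/U^2) ^ (1 - min μ (1-μ)) * (V^2/U^2)^μ) * U^2 :=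
          mul_le_mul_of_nonneg_right hup hX.le
      _ = Kc (V^2/U^2) ^ (1 - min μ (1-μ)) * ((V^2/U^2)^μ * U^2) := by ring
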